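/- arXiv:1107.0839 — 2 statements merged into one kernel-verified Lean document; each statement's English description precedes it below -/
import Mathlib

section
/- Let C be a compact subset of 𝒳 × P, where 𝒳 ⊂ L²(Ω,ℱ,ℙ) is closed, convex and bounded, and P ⊂ ℝ is compact. For θ ∈ Θ = [a,1], let ℒ(θ, C) = argmax{ E[X] − θ Var[X] − p : (X,p) ∈ C }. Then the union ⋃_{θ ∈ Θ} ℒ(θ, C) is a closed subset of 𝒳 × P. -/
set_option synthInstance.maxHeartbeats 1000000


open MeasureTheory

/-- The union over types θ ∈ [a,1] of the best-response sets ℒ(θ,C) is closed. -/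
theorem stmt2 {Ω : Type*} [MeasurableSpace Ω] (P : Measure Ω) [IsProbabilityMeasure P]
    (a : ℝ) (ha : 0 < a) (ha1 : a ≤ 1)
    (𝒳 : Set (Lp ℝ 2 P)) (h𝒳c : IsClosed 𝒳) (h𝒳conv : Convex ℝ 𝒳)
    (h𝒳b : Bornology.IsBounded 𝒳)
    (Pr : Set ℝ) (hPr : IsCompact Pr)
    (C : Set (Lp ℝ 2 P × ℝ)) (hC : IsCompact C) (hCsub : C ⊆ 𝒳 ×ˢ Pr)
    (u : ℝ → Lp ℝ 2 P × ℝ → ℝ)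
    (hu : ∀ θ c, u θ c = (∫ ω, (c.1 : Ω → ℝ) ω ∂P)
      - θ * ((∫ ω, ((c.1 : Ω → ℝ) ω) ^ 2 ∂P) - (∫ ω, (c.1 : Ω → ℝ) ω ∂P) ^ 2) - c.2) :
    IsClosed (⋃ θ ∈ Set.Icc a 1, {c ∈ C | ∀ c' ∈ C, u θ c' ≤ u θ c}) := by
  classical
  have h1 : MemLp (fun _ : Ω => (1 : ℝ)) 2 P := memLp_const 1
  set one : Lp ℝ 2 P := h1.toLp _ with hone
  have hI : ∀ X : Lp ℝ 2 P, (inner ℝ X one : ℝ) = ∫ ω, (X : Ω → ℝ) ω ∂P := by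
    intro X
    rw [L2.inner_def]
    refine integral_congr_ae ?_
    filter_upwards [h1.coeFn_toLp] with ω hω
    simp [hone, hω, RCLike.inner_apply]
  have hQ : ∀ X : Lp ℝ 2 P, (inner ℝ X X : ℝ) = ∫ ω, ((X : Ω → ℝ) ω) ^ 2 ∂P := by
    intro X
    rw [L2.inner_def]
    refine integral_congr_ae (Filter.Eventually.of_forall fun ω => ?_)
    simp [RCLike.inner_apply, sq]
  have hucont : Continuous (fun p : ℝ × (Lp ℝ 2 P × ℝ) => u p.1 p.2) := by
    have heq : (fun p : ℝ × (Lp ℝ 2 P × ℝ) => u p.1 p.2)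
        = fun p => (inner ℝ p.2.1 one : ℝ)
          - p.1 * ((inner ℝ p.2.1 p.2.1 : ℝ) - (inner ℝ p.2.1 one : ℝ) ^ 2) - p.2.2 := by
      funext p; rw [hu, hI, hQ]
    rw [heq]
    have hX : Continuous fun p : ℝ × (Lp ℝ 2 P × ℝ) => p.2.1 :=
      continuous_fst.comp continuous_snd
    have hc1 : Continuous fun p : ℝ × (Lp ℝ 2 P × ℝ) => (inner ℝ p.2.1 one : ℝ) :=
      hX.inner continuous_const
    have hc2 : Continuous fun p : ℝ × (Lp ℝ 2 P × ℝ) => (inner ℝ p.2.1 p.2.1 : ℝ) :=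
      hX.inner hX
    exact (hc1.sub (continuous_fst.mul (hc2.sub (hc1.pow 2)))).sub
      (continuous_snd.comp continuous_snd)
  set S : Set (ℝ × (Lp ℝ 2 P × ℝ)) :=
    (Set.Icc a 1 ×ˢ C) ∩ ⋂ c' ∈ C, {p | u p.1 c' ≤ u p.1 p.2} with hS
  have hSc : IsCompact S := by
    refine (isCompact_Icc.prod hC).inter_right ?_
    refine isClosed_biInter fun c' _ => isClosed_le ?_ hucont
    exact hucont.comp (continuous_fst.prodMk continuous_const)
  have hset : (⋃ θ ∈ Set.Icc a 1, {c ∈ C | ∀ c' ∈ C, u θ c' ≤ u θ c}) = Prod.snd '' S := by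
    ext c
    simp only [hS, Set.mem_iUnion, Set.mem_image, Set.mem_inter_iff, Set.mem_prod,
      Set.mem_iInter, Set.mem_setOf_eq, Set.mem_sep_iff]
    constructor
    · rintro ⟨θ, hθ, hcC, hmax⟩
      exact ⟨(θ, c), ⟨⟨hθ, hcC⟩, hmax⟩, rfl⟩
    · rintro ⟨⟨θ, c₀⟩, ⟨⟨hθ, hc₀⟩, hmax⟩, rfl⟩
      exact ⟨θ, hθ, hc₀, hmax⟩
  rw [hset]
  exact (hSc.image continuous_snd).isClosed
end

section
/- Let (S,d) be a metric space, Θ a measure space with finite measure μ, and for i = 1, 2 let π_i : Θ × S → ℝ be bounded, measurable in θ and such that (θ, s) ↦ max{π₁(θ,s), π₂(θ,s)} is upper semicontinuous in s for each θ, with a uniform integrable bound. Suppose for each s a tie-breaking rule f^s : Θ → [0,1] is chosen such that Σᵢ ∫_Θ πᵢ(θ,s) fᵢ^s(θ) dμ = sup over all measurable f : Θ → [0,1] of Σᵢ ∫_Θ πᵢ(θ,s) fᵢ(θ) dμ, where f₁ = f and f₂ = 1 − f. Then Σᵢ ∫_Θ πᵢ(θ,s) fᵢ^s(θ) dμ =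 ∫_Θ max{π₁(θ,s), π₂(θ,s)} dμ, and s ↦ Σᵢ ∫_Θ πᵢ(θ,s) fᵢ^s(θ) dμ is upper semicontinuous. -/
open MeasureTheory Filter

/-- Reverse Fatou for uniformly bounded real functions on a finite measure space. -/
private lemma aux_limsup_integral {Θ : Type*} [MeasurableSpace Θ] (μ : Measure Θ)
    [IsFiniteMeasure μ] (F : ℕ → Θ → ℝ) (G : Θ → ℝ) (C : ℝ) (hC : 0 ≤ C)
    (hF : ∀ n, Measurable (F n)) (hG : Measurable G)
    (hFb : ∀ n θ, |F n θ| ≤ C) (hGb : ∀ θ, |G θ| ≤ C)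
    (hlim : ∀ θ, limsup (fun n => F n θ) atTop ≤ G θ) :
    limsup (fun n => ∫ θ, F n θ ∂μ) atTop ≤ ∫ θ, G θ ∂μ := by
  set m : ℝ := (μ Set.univ).toReal with hm
  have hmnn : 0 ≤ m := ENNReal.toReal_nonneg
  -- integrability
  have intF : ∀ n, Integrable (F n) μ := fun n =>
    ⟨(hF n).aestronglyMeasurable, HasFiniteIntegral.of_bounded (C := C)
      (Eventually.of_forall fun θ => by simpa [Real.norm_eq_abs] using hFb n θ)⟩
  have intG : Integrable G μ :=
    ⟨hG.aestronglyMeasurable, HasFiniteIntegral.of_bounded (C := C)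
      (Eventually.of_forall fun θ => by simpa [Real.norm_eq_abs] using hGb θ)⟩
  -- bounds on the integrals
  have hIb : ∀ n, |∫ θ, F n θ ∂μ| ≤ C * m := fun n => by
    simpa [Real.norm_eq_abs, hm, measureReal_def] using
      norm_integral_le_of_norm_le_const (μ := μ) (f := F n) (C := C)
        (Eventually.of_forall fun θ => by simpa [Real.norm_eq_abs] using hFb n θ)
  have bddI : IsBoundedUnder (· ≤ ·) atTop (fun n => ∫ θ, F n θ ∂μ) :=
    isBoundedUnder_of ⟨C * m, fun n => (abs_le.1 (hIb n)).2⟩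
  have cobddI : IsCoboundedUnder (· ≤ ·) atTop (fun n => ∫ θ, F n θ ∂μ) :=
    (isBoundedUnder_of (r := (· ≥ ·)) ⟨-(C * m), fun n => (abs_le.1 (hIb n)).1⟩).isCoboundedUnder_le
  -- translate by C to get nonnegative functions
  have hFnn : ∀ n θ, 0 ≤ F n θ + C := fun n θ => by have := (abs_le.1 (hFb n θ)).1; linarith
  have hGnn : ∀ θ, 0 ≤ G θ + C := fun θ => by have := (abs_le.1 (hGb θ)).1; linarith
  have keyF : ∀ n, ENNReal.ofReal ((∫ θ, F n θ ∂μ) + C * m)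
      = ∫⁻ θ, ENNReal.ofReal (F n θ + C) ∂μ := by
    intro n
    have h1 : ∫ θ, (F n θ + C) ∂μ = ((∫⁻ θ, ENNReal.ofReal (F n θ + C) ∂μ)).toReal :=
      integral_eq_lintegral_of_nonneg_ae (ae_of_all _ (hFnn n))
        ((hF n).add measurable_const).aestronglyMeasurable
    have h2 : ∫ θ, (F n θ + C) ∂μ = (∫ θ, F n θ ∂μ) + C * m := by
      rw [integral_add (intF n) (integrable_const C), integral_const, smul_eq_mul, mul_comm]; rfl
    have hfin : ∫⁻ θ, ENNReal.ofReal (F n θ + C) ∂μ ≠ ⊤ := by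
      refine ne_top_of_le_ne_top (b := ENNReal.ofReal (2 * C) * μ Set.univ) ?_ ?_
      · exact ENNReal.mul_ne_top ENNReal.ofReal_ne_top (measure_ne_top μ _)
      · calc ∫⁻ θ, ENNReal.ofReal (F n θ + C) ∂μ
            ≤ ∫⁻ _, ENNReal.ofReal (2 * C) ∂μ := by
              refine lintegral_mono fun θ => ENNReal.ofReal_le_ofReal ?_
              have := (abs_le.1 (hFb n θ)).2; linarith
          _ = ENNReal.ofReal (2 * C) * μ Set.univ := by simp [lintegral_const]
    rw [← h2, h1, ENNReal.ofReal_toReal hfin]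
  have keyG : ENNReal.ofReal ((∫ θ, G θ ∂μ) + C * m)
      = ∫⁻ θ, ENNReal.ofReal (G θ + C) ∂μ := by
    have h1 : ∫ θ, (G θ + C) ∂μ = ((∫⁻ θ, ENNReal.ofReal (G θ + C) ∂μ)).toReal :=
      integral_eq_lintegral_of_nonneg_ae (ae_of_all _ hGnn)
        (hG.add measurable_const).aestronglyMeasurable
    have h2 : ∫ θ, (G θ + C) ∂μ = (∫ θ, G θ ∂μ) + C * m := by
      rw [integral_add intG (integrable_const C), integral_const, smul_eq_mul, mul_comm]; rfl
    have hfin : ∫⁻ θ, ENNReal.ofReal (G θ + C) ∂μ ≠ ⊤ := by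
      refine ne_top_of_le_ne_top (b := ENNReal.ofReal (2 * C) * μ Set.univ) ?_ ?_
      · exact ENNReal.mul_ne_top ENNReal.ofReal_ne_top (measure_ne_top μ _)
      · calc ∫⁻ θ, ENNReal.ofReal (G θ + C) ∂μ
            ≤ ∫⁻ _, ENNReal.ofReal (2 * C) ∂μ := by
              refine lintegral_mono fun θ => ENNReal.ofReal_le_ofReal ?_
              have := (abs_le.1 (hGb θ)).2; linarith
          _ = ENNReal.ofReal (2 * C) * μ Set.univ := by simp [lintegral_const]
    rw [← h2, h1, ENNReal.ofReal_toReal hfin]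
  -- reverse Fatou in ℝ≥0∞
  have fatou : limsup (fun n => ∫⁻ θ, ENNReal.ofReal (F n θ + C) ∂μ) atTop
      ≤ ∫⁻ θ, ENNReal.ofReal (G θ + C) ∂μ := by
    have hfin2 : ∫⁻ (_ : Θ), ENNReal.ofReal (2 * C) ∂μ ≠ ⊤ := by
      rw [lintegral_const]
      exact ENNReal.mul_ne_top ENNReal.ofReal_ne_top (measure_ne_top μ _)
    refine le_trans (limsup_lintegral_le (μ := μ)
      (f := fun n θ => ENNReal.ofReal (F n θ + C)) (fun _ => ENNReal.ofReal (2 * C))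
      (fun n => ((hF n).add measurable_const).ennreal_ofReal)
      (fun n => Eventually.of_forall fun θ => ENNReal.ofReal_le_ofReal (by
        have := (abs_le.1 (hFb n θ)).2; linarith))
      hfin2) (lintegral_mono fun θ => ?_)
    -- pointwise: limsup of ofReal
    have hbθ : IsBoundedUnder (· ≤ ·) atTop (fun n => F n θ + C) :=
      isBoundedUnder_of ⟨2 * C, fun n => by have := (abs_le.1 (hFb n θ)).2; linarith⟩
    have hcbθ : IsCoboundedUnder (· ≤ ·) atTop (fun n => F n θ + C) :=
      (isBoundedUnder_of (r := (· ≥ ·)) ⟨0, fun n => hFnn n θ⟩).isCoboundedUnder_le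
    have hmap : ENNReal.ofReal (limsup (fun n => F n θ + C) atTop)
        = limsup (fun n => ENNReal.ofReal (F n θ + C)) atTop :=
      Monotone.map_limsup_of_continuousAt (F := atTop)
        (f := ENNReal.ofReal) (fun _ _ h => ENNReal.ofReal_le_ofReal h)
        (fun n => F n θ + C) ENNReal.continuous_ofReal.continuousAt hbθ hcbθ
    rw [← hmap]
    refine ENNReal.ofReal_le_ofReal ?_
    have hbθ' : IsBoundedUnder (· ≤ ·) atTop (fun n => F n θ) :=
      isBoundedUnder_of ⟨C, fun n => (abs_le.1 (hFb n θ)).2⟩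
    have hcbθ' : IsCoboundedUnder (· ≤ ·) atTop (fun n => F n θ) :=
      (isBoundedUnder_of (r := (· ≥ ·)) ⟨-C, fun n => (abs_le.1 (hFb n θ)).1⟩).isCoboundedUnder_le
    rw [limsup_add_const atTop (fun n => F n θ) C hbθ' hcbθ']
    exact add_le_add_left (hlim θ) C
  -- put things together
  have hsum : limsup (fun n => (∫ θ, F n θ ∂μ) + C * m) atTop
      ≤ (∫ θ, G θ ∂μ) + C * m := by
    have hnn : 0 ≤ limsup (fun n => (∫ θ, F n θ ∂μ) + C * m) atTop := by
      refine le_limsup_of_frequently_le (Frequently.of_forall fun n => ?_)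
        (isBoundedUnder_of ⟨C * m + C * m, fun n => by
          have := (abs_le.1 (hIb n)).2; linarith⟩)
      have := (abs_le.1 (hIb n)).1; linarith
    have hGnn' : 0 ≤ (∫ θ, G θ ∂μ) + C * m := by
      have : |∫ θ, G θ ∂μ| ≤ C * m := by
        simpa [Real.norm_eq_abs, hm, measureReal_def] using
          norm_integral_le_of_norm_le_const (μ := μ) (f := G) (C := C)
            (Eventually.of_forall fun θ => by simpa [Real.norm_eq_abs] using hGb θ)
      have := (abs_le.1 this).1; linarith
    rw [← ENNReal.ofReal_le_ofReal_iff hGnn']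
    calc ENNReal.ofReal (limsup (fun n => (∫ θ, F n θ ∂μ) + C * m) atTop)
        = limsup (fun n => ENNReal.ofReal ((∫ θ, F n θ ∂μ) + C * m)) atTop :=
          Monotone.map_limsup_of_continuousAt (F := atTop)
            (f := ENNReal.ofReal) (fun _ _ h => ENNReal.ofReal_le_ofReal h)
            (fun n => (∫ θ, F n θ ∂μ) + C * m) ENNReal.continuous_ofReal.continuousAt
            (isBoundedUnder_of ⟨C * m + C * m, fun n => by
              have := (abs_le.1 (hIb n)).2; linarith⟩)
            ((isBoundedUnder_of (r := (· ≥ ·)) ⟨0, fun n => by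
              have := (abs_le.1 (hIb n)).1; linarith⟩).isCoboundedUnder_le)
      _ = limsup (fun n => ∫⁻ θ, ENNReal.ofReal (F n θ + C) ∂μ) atTop := by
          simp only [keyF]
      _ ≤ ∫⁻ θ, ENNReal.ofReal (G θ + C) ∂μ := fatou
      _ = ENNReal.ofReal ((∫ θ, G θ ∂μ) + C * m) := keyG.symm
  have := limsup_add_const atTop (fun n => ∫ θ, F n θ ∂μ) (C * m) bddI cobddI
  rw [this] at hsum
  linarith

/-- Under efficient tie-breaking rules the aggregate payoff equals the integral of the
pointwise maximum of the per-type profits, and is upper semicontinuous in the strategy. -/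
theorem stmt7 {S : Type*} [MetricSpace S] {Θ : Type*} [MeasurableSpace Θ]
    (μ : Measure Θ) [IsFiniteMeasure μ]
    (π₁ π₂ : Θ → S → ℝ) (B : ℝ)
    (hmeas : ∀ s : S, Measurable (fun θ => π₁ θ s) ∧ Measurable (fun θ => π₂ θ s))
    (hbdd : ∀ (θ : Θ) (s : S), |π₁ θ s| ≤ B ∧ |π₂ θ s| ≤ B)
    (husc : ∀ θ : Θ, UpperSemicontinuous (fun s => max (π₁ θ s) (π₂ θ s)))
    (f : S → Θ → ℝ)
    (hf01 : ∀ (s : S) (θ : Θ), f s θ ∈ Set.Icc (0 : ℝ) 1)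
    (hfmeas : ∀ s, Measurable (f s))
    (heff : ∀ s : S, ∀ g : Θ → ℝ, Measurable g → (∀ θ, g θ ∈ Set.Icc (0 : ℝ) 1) →
      (∫ θ, π₁ θ s * g θ + π₂ θ s * (1 - g θ) ∂μ) ≤
      ∫ θ, π₁ θ s * f s θ + π₂ θ s * (1 - f s θ) ∂μ) :
    (∀ s : S, (∫ θ, π₁ θ s * f s θ + π₂ θ s * (1 - f s θ) ∂μ)
        = ∫ θ, max (π₁ θ s) (π₂ θ s) ∂μ) ∧
    UpperSemicontinuous (fun s => ∫ θ, π₁ θ s * f s θ + π₂ θ s * (1 - f s θ) ∂μ) := by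
  set C : ℝ := |B| with hCdef
  have hC : 0 ≤ C := abs_nonneg B
  have hb1 : ∀ θ s, |π₁ θ s| ≤ C := fun θ s => (hbdd θ s).1.trans (le_abs_self B)
  have hb2 : ∀ θ s, |π₂ θ s| ≤ C := fun θ s => (hbdd θ s).2.trans (le_abs_self B)
  have hMmeas : ∀ s, Measurable (fun θ => max (π₁ θ s) (π₂ θ s)) := fun s =>
    (hmeas s).1.max (hmeas s).2
  have hMb : ∀ θ s, |max (π₁ θ s) (π₂ θ s)| ≤ C := fun θ s =>
    abs_max_le_max_abs_abs.trans (max_le (hb1 θ s) (hb2 θ s))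
  -- the main equality for each s
  have heq : ∀ s : S, (∫ θ, π₁ θ s * f s θ + π₂ θ s * (1 - f s θ) ∂μ)
      = ∫ θ, max (π₁ θ s) (π₂ θ s) ∂μ := by
    intro s
    have hintM : Integrable (fun θ => max (π₁ θ s) (π₂ θ s)) μ :=
      ⟨(hMmeas s).aestronglyMeasurable, HasFiniteIntegral.of_bounded (C := C)
        (Eventually.of_forall fun θ => by simpa [Real.norm_eq_abs] using hMb θ s)⟩
    have hintI : Integrable (fun θ => π₁ θ s * f s θ + π₂ θ s * (1 - f s θ)) μ := by
      refine ⟨(((hmeas s).1.mul (hfmeas s)).add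
        ((hmeas s).2.mul (measurable_const.sub (hfmeas s)))).aestronglyMeasurable,
        HasFiniteIntegral.of_bounded (C := C) (Eventually.of_forall fun θ => ?_)⟩
      obtain ⟨h0, h1⟩ := hf01 s θ
      have e1 := abs_le.1 (hb1 θ s); have e2 := abs_le.1 (hb2 θ s)
      rw [Real.norm_eq_abs, abs_le]
      constructor <;> nlinarith [e1.1, e1.2, e2.1, e2.2]
    refine le_antisymm ?_ ?_
    · refine integral_mono hintI hintM fun θ => ?_
      obtain ⟨h0, h1⟩ := hf01 s θ
      have l1 : π₁ θ s ≤ max (π₁ θ s) (π₂ θ s) := le_max_left _ _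
      have l2 : π₂ θ s ≤ max (π₁ θ s) (π₂ θ s) := le_max_right _ _
      nlinarith
    · set g : Θ → ℝ := Set.indicator {θ | π₂ θ s ≤ π₁ θ s} 1 with hg
      have hgmeas : Measurable g :=
        measurable_one.indicator (measurableSet_le (hmeas s).2 (hmeas s).1)
      have hg01 : ∀ θ, g θ ∈ Set.Icc (0 : ℝ) 1 := by
        intro θ
        by_cases h : θ ∈ {θ | π₂ θ s ≤ π₁ θ s} <;>
          simp [hg, Set.indicator_of_mem, Set.indicator_of_notMem, h]
      have hgeq : ∀ θ, π₁ θ s * g θ + π₂ θ s * (1 - g θ) = max (π₁ θ s) (π₂ θ s) := by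
        intro θ
        by_cases h : θ ∈ {θ | π₂ θ s ≤ π₁ θ s}
        · simp only [hg, Set.indicator_of_mem h, Pi.one_apply]
          rw [max_eq_left h]; ring
        · simp only [hg, Set.indicator_of_notMem h, Pi.one_apply]
          rw [max_eq_right (le_of_lt (not_le.1 h))]; ring
      have := heff s g hgmeas hg01
      calc ∫ θ, max (π₁ θ s) (π₂ θ s) ∂μ
          = ∫ θ, π₁ θ s * g θ + π₂ θ s * (1 - g θ) ∂μ :=
            integral_congr_ae (ae_of_all _ fun θ => (hgeq θ).symm)
        _ ≤ _ := this
  refine ⟨heq, ?_⟩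
  -- upper semicontinuity
  intro s y hy
  have hy' : (∫ θ, π₁ θ s * f s θ + π₂ θ s * (1 - f s θ) ∂μ) < y := hy
  rw [heq s] at hy' 
  by_contra hcon
  rw [Filter.not_eventually] at hcon
  have hclos : s ∈ closure {t : S | y ≤ ∫ θ, π₁ θ t * f t θ + π₂ θ t * (1 - f t θ) ∂μ} := by
    rw [mem_closure_iff_frequently]
    exact hcon.mono fun t ht => not_lt.1 ht
  obtain ⟨u, hu, htend⟩ := mem_closure_iff_seq_limit.1 hclos
  -- apply the reverse Fatou lemma along the sequence u
  have key : limsup (fun n => ∫ θ, max (π₁ θ (u n)) (π₂ θ (u n)) ∂μ) atTop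
      ≤ ∫ θ, max (π₁ θ s) (π₂ θ s) ∂μ := by
    refine aux_limsup_integral μ (fun n θ => max (π₁ θ (u n)) (π₂ θ (u n)))
      (fun θ => max (π₁ θ s) (π₂ θ s)) C hC (fun n => hMmeas (u n)) (hMmeas s)
      (fun n θ => hMb θ (u n)) (fun θ => hMb θ s) (fun θ => ?_)
    -- pointwise limsup via upper semicontinuity
    have hcbθ : IsCoboundedUnder (· ≤ ·) atTop (fun n => max (π₁ θ (u n)) (π₂ θ (u n))) :=
      (isBoundedUnder_of (r := (· ≥ ·)) ⟨-C, fun n =>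
        (abs_le.1 (hMb θ (u n))).1⟩).isCoboundedUnder_le
    by_contra hgt
    push_neg at hgt
    obtain ⟨z, hz1, hz2⟩ := exists_between hgt
    have hev : ∀ᶠ t in nhds s, max (π₁ θ t) (π₂ θ t) < z := husc θ s z hz1
    have hevn : ∀ᶠ n in atTop, max (π₁ θ (u n)) (π₂ θ (u n)) < z := htend.eventually hev
    exact absurd (limsup_le_of_le hcbθ (hevn.mono fun n h => le_of_lt h)) (not_le.2 hz2)
  have hIub : ∀ n, |∫ θ, max (π₁ θ (u n)) (π₂ θ (u n)) ∂μ| ≤ C * (μ Set.univ).toReal :=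
    fun n => by
      simpa [Real.norm_eq_abs, measureReal_def] using
        norm_integral_le_of_norm_le_const (μ := μ) (C := C)
          (f := fun θ => max (π₁ θ (u n)) (π₂ θ (u n)))
          (Eventually.of_forall fun θ => by simpa [Real.norm_eq_abs] using hMb θ (u n))
  have hylim : y ≤ limsup (fun n => ∫ θ, max (π₁ θ (u n)) (π₂ θ (u n)) ∂μ) atTop := by
    refine le_limsup_of_frequently_le (Frequently.of_forall fun n => ?_)
      (isBoundedUnder_of ⟨C * (μ Set.univ).toReal, fun n => (abs_le.1 (hIub n)).2⟩)
    have := hu n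
    rwa [Set.mem_setOf_eq, heq (u n)] at this
  exact absurd (hylim.trans key) (not_le.2 hy')
end
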